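/- Union grows the equivalence: with X finite, f : X → X with ≤f antisymmetric, rx ry roots of f (f rx = rx, f ry = ry), and g = Function.update f rx ry, the relation retr f = {(n,m) | n ≡f m} is contained in retr g, and (rx, ry) ∈ retr g. -/
import Mathlib

def lef {X : Type*} (f : X → X) (n m : X) : Prop :=
  Relation.ReflTransGen (fun a b => b = f a) n m

def eqf {X : Type*} (f : X → X) (n m : X) : Prop :=
  ∃ k, lef f n k ∧ lef f m k

def retr {X : Type*} (f : X → X) : Set (X × X) := {p | eqf f p.1 p.2}

theorem stmt_12 {X : Type*} [Fintype X] [DecidableEq X] (f : X → X)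
    (antisym : ∀ n m : X, lef f n m → lef f m n → n = m)
    (rx ry : X) (hrx : f rx = rx) (hry : f ry = ry) :
    retr f ⊆ retr (Function.update f rx ry) ∧
    (rx, ry) ∈ retr (Function.update f rx ry) := by
  set g := Function.update f rx ry with hg
  have key : ∀ n m : X, lef f n m → lef g n m := by
    intro n m h
    induction h with
    | refl => exact Relation.ReflTransGen.refl
    | @tail b c _ hstep ih =>
      by_cases hb : b = rx
      · subst hb
        rw [hrx] at hstep
        subst hstep
        exact ih
      · exact ih.tail (by rw [hstep, hg, Function.update_of_ne hb])
  constructor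
  · rintro ⟨n, m⟩ ⟨k, h1, h2⟩
    exact ⟨k, key _ _ h1, key _ _ h2⟩
  · exact ⟨ry, Relation.ReflTransGen.single (by simp [hg]), Relation.ReflTransGen.refl⟩
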